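/- Suppose φ_{n+1} is a polynomial with real coefficients, φ*_{n+1}(z) = z^{n+1} φ_{n+1}(1/z) for z ≠ 0, and set K_n(z,z) = (|φ*_{n+1}(z)|² − |φ_{n+1}(z)|²)/(1 − |z|²), K_n^{(0,1)}(z,z) = (conj(φ*'_{n+1}(z))φ*_{n+1}(z) − conj(φ'_{n+1}(z))φ_{n+1}(z))/(1−|z|²) + z·K_n(z,z)/(1−|z|²), and K_n^{(1,1)}(z,z) = (|φ*'_{n+1}(z)|² − |φ'_{n+1}(z)|²)/(1−|z|²) + (conj(z)·K_n^{(0,1)}(z,z) + z·conj(K_n^{(0,1)}(z,z)) + K_n(z,z))/(1−|z|²). Then for |z| ≠ 1, K_n^{(1,1)}(z,z)·K_n(z,z) − |K_n^{(0,1)}(z,z)|² = (K_n(z,z))²/(1−|z|²)² − |φ*_{n+1}(z)·φ'_{n+1}(z) − φ*'_{n+1}(z)·φ_{n+1}(z)|²/(1−|z|²)². -/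

import Mathlib

open Complex
set_option maxHeartbeats 1000000

lemma habs (w : ℂ) : ((‖w‖ ^ 2 : ℝ) : ℂ) = w * (starRingEnd ℂ) w := by
  rw [Complex.sq_norm, Complex.mul_conj]

lemma key (a A b B c C d D z w : ℂ) (hs : 1 - z * w ≠ 0) :
    ((d * D - c * C) / (1 - z * w)
        + (w * ((D * b - C * a) / (1 - z * w) + z * ((b * B - a * A) / (1 - z * w)) / (1 - z * w))
          + z * ((d * B - c * A) / (1 - z * w) + w * ((b * B - a * A) / (1 - z * w)) / (1 - z * w))
          + (b * B - a * A) / (1 - z * w)) / (1 - z * w)) * ((b * B - a * A) / (1 - z * w))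
      - ((D * b - C * a) / (1 - z * w) + z * ((b * B - a * A) / (1 - z * w)) / (1 - z * w))
        * ((d * B - c * A) / (1 - z * w) + w * ((b * B - a * A) / (1 - z * w)) / (1 - z * w)) =
    ((b * B - a * A) / (1 - z * w)) ^ 2 / (1 - z * w) ^ 2
      - (b * c - d * a) * (B * C - D * A) / (1 - z * w) ^ 2 := by
  set t : ℂ := 1 - z * w with htdef
  have ht2 : t ^ 2 ≠ 0 := pow_ne_zero _ hs
  have ht3 : t ^ 3 ≠ 0 := pow_ne_zero _ hs
  have ht4 : t ^ 4 ≠ 0 := pow_ne_zero _ hs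
  have h01 : (D * b - C * a) / t + z * ((b * B - a * A) / t) / t
      = ((D * b - C * a) * t + z * (b * B - a * A)) / t ^ 2 := by
    field_simp
  have h01b : (d * B - c * A) / t + w * ((b * B - a * A) / t) / t
      = ((d * B - c * A) * t + w * (b * B - a * A)) / t ^ 2 := by
    field_simp
  rw [h01, h01b]
  have h11 : (d * D - c * C) / t
      + (w * (((D * b - C * a) * t + z * (b * B - a * A)) / t ^ 2)
        + z * (((d * B - c * A) * t + w * (b * B - a * A)) / t ^ 2)
        + (b * B - a * A) / t) / t
      = ((d * D - c * C) * t ^ 2 + w * ((D * b - C * a) * t + z * (b * B - a * A))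
        + z * ((d * B - c * A) * t + w * (b * B - a * A)) + (b * B - a * A) * t) / t ^ 3 := by
    field_simp; ring
  rw [h11, div_mul_div_comm, div_mul_div_comm, div_pow, div_div]
  rw [show t ^ 3 * t = t ^ 4 by ring, show t ^ 2 * t ^ 2 = t ^ 4 by ring]
  rw [div_sub_div _ _ ht4 ht4, div_sub_div _ _ ht4 ht2,
    div_eq_div_iff (mul_ne_zero ht4 ht4) (mul_ne_zero ht4 ht2)]
  ring

theorem stmt3 (z phi phis dphi dphis : ℂ) (hz : ‖z‖ ≠ 1) :
    let s : ℂ := 1 - ((‖z‖ : ℝ) : ℂ) ^ 2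
    let K : ℂ := ((((‖phis‖) ^ 2 - (‖phi‖) ^ 2 : ℝ)) : ℂ) / s
    let K01 : ℂ := ((starRingEnd ℂ) dphis * phis - (starRingEnd ℂ) dphi * phi) / s
        + z * K / s
    let K11 : ℂ := ((((‖dphis‖) ^ 2 - (‖dphi‖) ^ 2 : ℝ)) : ℂ) / s
        + ((starRingEnd ℂ) z * K01 + z * (starRingEnd ℂ) K01 + K) / s
    K11 * K - (((‖K01‖) ^ 2 : ℝ) : ℂ) =
      K ^ 2 / s ^ 2
        - (((‖phis * dphi - dphis * phi‖) ^ 2 : ℝ) : ℂ) / s ^ 2 := by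
  intro s K K01 K11
  have hzz : ((‖z‖ : ℝ) : ℂ) ^ 2 = z * (starRingEnd ℂ) z := by
    rw [← Complex.ofReal_pow, Complex.sq_norm, Complex.mul_conj]
  have hs : (1 : ℂ) - z * (starRingEnd ℂ) z ≠ 0 := by
    rw [← hzz]
    simp only [sub_ne_zero]
    intro h
    apply hz
    have h2 : ((‖z‖ ^ 2 : ℝ) : ℂ) = ((1 : ℝ) : ℂ) := by push_cast; rw [← h]
    have := Complex.ofReal_injective h2
    nlinarith [norm_nonneg z]
  have hmain := key phi ((starRingEnd ℂ) phi) phis ((starRingEnd ℂ) phis)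
    dphi ((starRingEnd ℂ) dphi) dphis ((starRingEnd ℂ) dphis) z ((starRingEnd ℂ) z) hs
  simp only [K11, K01, K, s, Complex.ofReal_sub, habs, hzz, map_div₀, map_sub, map_add,
    map_mul, map_one, Complex.conj_conj]
  linear_combination hmain
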